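/- For a fixed assignment x ∈ X₁×…×Xₙ and a tree G=(V,E), define for each assignment u the coefficient α_u = Σᵢ 1[uᵢ=xᵢ] − Σ_{(i,j)∈E} 1[uᵢ=xᵢ ∨ uⱼ=xⱼ]. Then α_x = 1, and α_u ≤ 0 for every u ≠ x. -/

import Mathlib

open Finset

/-- Coefficients `α_u = Σᵢ 1[uᵢ=xᵢ] − Σ_{(i,j)∈E} 1[uᵢ=xᵢ ∨ uⱼ=xⱼ]` for a tree satisfy
`α_x = 1` and `α_u ≤ 0` for `u ≠ x`. -/
theorem stmt2 {n : ℕ} (hn : 1 ≤ n) {X : Fin n → Type*} [∀ i, Fintype (X i)]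
    [∀ i, Nonempty (X i)] [∀ i, DecidableEq (X i)]
    (G : SimpleGraph (Fin n)) [DecidableRel G.Adj] (hG : G.IsTree)
    (x : ∀ i, X i) :
    (fun u : ∀ i, X i =>
      ((Finset.univ.filter (fun i => u i = x i)).card : ℤ)
        - ((Finset.univ.filter (fun e : Fin n × Fin n =>
              e.1 < e.2 ∧ G.Adj e.1 e.2 ∧ (u e.1 = x e.1 ∨ u e.2 = x e.2))).card : ℤ)) x = 1
    ∧ ∀ u : ∀ i, X i, u ≠ x →
      ((Finset.univ.filter (fun i => u i = x i)).card : ℤ)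
        - ((Finset.univ.filter (fun e : Fin n × Fin n =>
              e.1 < e.2 ∧ G.Adj e.1 e.2 ∧ (u e.1 = x e.1 ∨ u e.2 = x e.2))).card : ℤ) ≤ 0 := by
  classical
  constructor
  · -- α_x = 1
    show ((Finset.univ.filter (fun i : Fin n => x i = x i)).card : ℤ)
        - ((Finset.univ.filter (fun e : Fin n × Fin n =>
            e.1 < e.2 ∧ G.Adj e.1 e.2 ∧ (x e.1 = x e.1 ∨ x e.2 = x e.2))).card : ℤ) = 1
    have h1 : (Finset.univ.filter (fun i : Fin n => x i = x i)).card = n := by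
      simp
    have h2 : (Finset.univ.filter (fun e : Fin n × Fin n =>
        e.1 < e.2 ∧ G.Adj e.1 e.2 ∧ (x e.1 = x e.1 ∨ x e.2 = x e.2))).card
        = G.edgeFinset.card := by
      refine Finset.card_bij (fun e _ => Sym2.mk e.1 e.2) ?_ ?_ ?_
      · intro e he
        simp only [mem_filter] at he
        have : Sym2.mk e.1 e.2 = s(e.1, e.2) := rfl
        rw [this, SimpleGraph.mem_edgeFinset, SimpleGraph.mem_edgeSet]
        exact he.2.2.1
      · intro e he f hf hef
        simp only [mem_filter] at he hf
        rcases Sym2.mk_eq_mk_iff.mp hef with h | h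
        · exact h
        · exfalso
          have h1 : e.1 = f.2 := congrArg Prod.fst h
          have h2 : e.2 = f.1 := congrArg Prod.snd h
          have := he.2.1
          rw [h1, h2] at this
          exact absurd (this.trans hf.2.1) (lt_irrefl _)
      · intro s hs
        induction s using Sym2.ind with
        | _ a b =>
          rw [SimpleGraph.mem_edgeFinset, SimpleGraph.mem_edgeSet] at hs
          rcases hs.ne.lt_or_gt with h | h
          · exact ⟨(a, b), by simp [mem_filter, h, hs], rfl⟩
          · exact ⟨(b, a), by simp [mem_filter, h, hs.symm], Sym2.eq_swap⟩
    have h3 : G.edgeFinset.card + 1 = n := by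
      simpa using hG.card_edgeFinset
    rw [h1, h2]
    omega
  · -- α_u ≤ 0 for u ≠ x
    intro u hu
    set S := Finset.univ.filter (fun i : Fin n => u i = x i) with hS
    set T := Finset.univ.filter (fun e : Fin n × Fin n =>
        e.1 < e.2 ∧ G.Adj e.1 e.2 ∧ (u e.1 = x e.1 ∨ u e.2 = x e.2)) with hT
    suffices h : S.card ≤ T.card by
      have := Int.ofNat_le.mpr h
      omega
    -- pick a root where u and x disagree
    obtain ⟨r, hr⟩ : ∃ r, u r ≠ x r := by
      by_contra h
      push_neg at h
      exact hu (funext h)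
    -- parent function decreasing distance to r
    have hpar : ∀ i : Fin n, i ≠ r → ∃ j, G.Adj i j ∧ G.dist j r < G.dist i r := by
      intro i hir
      obtain ⟨p, hp⟩ := hG.isConnected.exists_walk_length_eq_dist i r
      cases p with
      | nil => exact absurd rfl hir
      | cons h q =>
        refine ⟨_, h, ?_⟩
        have hle := SimpleGraph.dist_le q
        simp only [SimpleGraph.Walk.length_cons] at hp
        omega
    choose f hadj hdist using hpar
    set f' : Fin n → Fin n := fun i => if h : i = r then i else f i h with hf'
    have hadj' : ∀ i, i ≠ r → G.Adj i (f' i) := by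
      intro i hi
      simp only [hf', dif_neg hi]
      exact hadj i hi
    have hdist' : ∀ i, i ≠ r → G.dist (f' i) r < G.dist i r := by
      intro i hi
      simp only [hf', dif_neg hi]
      exact hdist i hi
    set g : Fin n → Fin n × Fin n := fun i => (min i (f' i), max i (f' i)) with hg
    apply Finset.card_le_card_of_injOn g
    · intro i hi
      simp only [hS, Finset.coe_filter, Set.mem_setOf_eq, mem_filter] at hi
      have hir : i ≠ r := fun h => hr (h ▸ hi.2)
      have hne : i ≠ f' i := (hadj' i hir).ne
      simp only [hT, Finset.coe_filter, Set.mem_setOf_eq, mem_filter, hg]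
      rcases lt_or_gt_of_ne hne with h | h
      · rw [min_eq_left h.le, max_eq_right h.le]
        exact ⟨mem_univ _, h, hadj' i hir, Or.inl hi.2⟩
      · rw [min_eq_right h.le, max_eq_left h.le]
        exact ⟨mem_univ _, h, (hadj' i hir).symm, Or.inr hi.2⟩
    · intro i hi j hj hij
      simp only [hS, Finset.coe_filter, Set.mem_setOf_eq] at hi hj
      have hir : i ≠ r := fun h => hr (h ▸ hi.2)
      have hjr : j ≠ r := fun h => hr (h ▸ hj.2)
      have hnei : i ≠ f' i := (hadj' i hir).ne
      have hnej : j ≠ f' j := (hadj' j hjr).ne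
      have hdi := hdist' i hir
      have hdj := hdist' j hjr
      simp only [hg, Prod.mk.injEq] at hij
      have hi' : i = j ∨ i = f' j := by
        rcases le_total i (f' i) with h | h
        · rw [← min_eq_left h, hij.1]
          exact (min_cases j (f' j)).imp (fun a => a.1) (fun a => a.1)
        · rw [← max_eq_left h, hij.2]
          exact (max_cases j (f' j)).imp (fun a => a.1) (fun a => a.1)
      have hj' : j = i ∨ j = f' i := by
        rcases le_total j (f' j) with h | h
        · rw [← min_eq_left h, ← hij.1]
          exact (min_cases i (f' i)).imp (fun a => a.1) (fun a => a.1)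
        · rw [← max_eq_left h, ← hij.2]
          exact (max_cases i (f' i)).imp (fun a => a.1) (fun a => a.1)
      rcases hi' with h | h
      · exact h
      rcases hj' with h' | h'
      · exact h'.symm
      rw [← h'] at hdi
      rw [← h] at hdj
      omega
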